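/- Let G be a unicyclic graph whose unique cycle is u_1,...,u_n with n ≥ 3. Suppose N_G(u_1) = {u_2, u_n, v_1} and N_G(v_1) = {u_1, v_2}, where v_2 is a leaf of G. Let H be the induced subgraph of G on V(G) \ {u_1, v_1, v_2}. Then τ_max(H) ≤ τ_max(G) − 2. -/

import Mathlib

/-- `C` is a vertex cover of the graph `G`. -/
def gIsCover {V : Type} (G : SimpleGraph V) (C : Finset V) : Prop :=
  ∀ ⦃x y⦄, G.Adj x y → x ∈ C ∨ y ∈ C

/-- `C` is a minimal vertex cover of `G`. -/
def gIsMinCover {V : Type} (G : SimpleGraph V) (C : Finset V) : Prop :=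
  gIsCover G C ∧ ∀ D ⊂ C, ¬ gIsCover G D

/-- `τ_max(G)`: the maximum cardinality of a minimal vertex cover of `G`. -/
noncomputable def gTauMax {V : Type} (G : SimpleGraph V) : ℕ :=
  sSup {m | ∃ C : Finset V, gIsMinCover G C ∧ C.card = m}

/-- The subgraph of `G` induced on the vertex subset `s` (kept on the same ambient
vertex type: all vertices outside `s` become isolated, which does not affect
minimal vertex covers). -/
def SimpleGraph.restrict {V : Type} (G : SimpleGraph V) (s : Set V) : SimpleGraph V where
  Adj x y := G.Adj x y ∧ x ∈ s ∧ y ∈ s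
  symm := ⟨fun x y ⟨h, hx, hy⟩ => ⟨h.symm, hy, hx⟩⟩
  loopless := ⟨fun x ⟨h, _, _⟩ => G.loopless.irrefl x h⟩

lemma gMinCover_iff {V : Type} [DecidableEq V] (G : SimpleGraph V) (C : Finset V) :
    gIsMinCover G C ↔ gIsCover G C ∧ ∀ x ∈ C, ∃ y, G.Adj x y ∧ y ∉ C := by
  constructor
  · rintro ⟨hc, hmin⟩
    refine ⟨hc, fun x hx => ?_⟩
    by_contra h
    push_neg at h
    apply hmin (C.erase x) (Finset.erase_ssubset hx)
    intro a b hab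
    rcases hc hab with ha | hb
    · by_cases hax : a = x
      · subst hax
        exact Or.inr (Finset.mem_erase.2 ⟨(G.ne_of_adj hab).symm, h b hab⟩)
      · exact Or.inl (Finset.mem_erase.2 ⟨hax, ha⟩)
    · by_cases hbx : b = x
      · subst hbx
        exact Or.inl (Finset.mem_erase.2 ⟨G.ne_of_adj hab, h a hab.symm⟩)
      · exact Or.inr (Finset.mem_erase.2 ⟨hbx, hb⟩)
  · rintro ⟨hc, hpriv⟩
    refine ⟨hc, fun D hD hDc => ?_⟩
    obtain ⟨x, hxC, hxD⟩ := Finset.exists_of_ssubset hD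
    obtain ⟨y, hadj, hyC⟩ := hpriv x hxC
    rcases hDc hadj with h | h
    · exact hxD h
    · exact hyC (hD.subset h)

lemma exists_gMinCover {V : Type} [Fintype V] (G : SimpleGraph V) :
    ∃ C : Finset V, gIsMinCover G C := by
  have hne : {m | ∃ C : Finset V, gIsCover G C ∧ C.card = m}.Nonempty :=
    ⟨Finset.univ.card, Finset.univ, fun x y _ => Or.inl (Finset.mem_univ x), rfl⟩
  obtain ⟨C, hC, hcard⟩ := Nat.sInf_mem hne
  refine ⟨C, hC, fun D hD hDc => ?_⟩
  have h1 : D.card < C.card := Finset.card_lt_card hD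
  have h2 : sInf {m | ∃ C : Finset V, gIsCover G C ∧ C.card = m} ≤ D.card :=
    Nat.sInf_le ⟨D, hDc, rfl⟩
  omega

/-- Let `G` be a unicyclic graph whose unique cycle is `u₁,...,u_n`
(`n ≥ 3`); uniqueness of the cycle is expressed by: deleting one cycle edge leaves an
acyclic graph. Suppose `N_G(u₁) = {u₂, u_n, v₁}` and `N_G(v₁) = {u₁, v₂}` with `v₂` a
leaf. If `H` is the induced subgraph on `V(G) \ {u₁, v₁, v₂}`, then
`τ_max(H) ≤ τ_max(G) - 2`. -/
theorem stmt_9 {V : Type} [Fintype V] [DecidableEq V] (G : SimpleGraph V)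
    [DecidableRel G.Adj] (n : ℕ) (hn : 3 ≤ n)
    (u : Fin n → V) (hinj : Function.Injective u)
    (hcyc : ∀ i : Fin n, G.Adj (u i) (u (i + ⟨1, by omega⟩)))
    (hunicyclic : (G.deleteEdges {s(u ⟨0, by omega⟩, u ⟨1, by omega⟩)}).IsAcyclic)
    (v1 v2 : V)
    (hN1 : G.neighborSet (u ⟨0, by omega⟩) = {u ⟨1, by omega⟩, u ⟨n - 1, by omega⟩, v1})
    (hNv1 : G.neighborSet v1 = {u ⟨0, by omega⟩, v2})
    (hv2leaf : G.degree v2 = 1) :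
    gTauMax (G.restrict {x | x ≠ u ⟨0, by omega⟩ ∧ x ≠ v1 ∧ x ≠ v2}) + 2
      ≤ gTauMax G := by
  set u1 : V := u ⟨0, by omega⟩ with hu1def
  set u2 : V := u ⟨1, by omega⟩ with hu2def
  set un : V := u ⟨n - 1, by omega⟩ with hundef
  set s : Set V := {x | x ≠ u1 ∧ x ≠ v1 ∧ x ≠ v2} with hsdef
  set H : SimpleGraph V := G.restrict s with hHdef
  have hrestrict : ∀ x y : V, H.Adj x y ↔ G.Adj x y ∧ x ∈ s ∧ y ∈ s := fun x y => Iff.rfl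
  -- basic adjacencies
  have hadj_u1v1 : G.Adj u1 v1 := by
    have : v1 ∈ G.neighborSet u1 := by rw [hN1]; simp
    exact this
  have hadj_v1v2 : G.Adj v1 v2 := by
    have : v2 ∈ G.neighborSet v1 := by rw [hNv1]; simp
    exact this
  have hadj_u1u2 : G.Adj u1 u2 := by
    have h := hcyc ⟨0, by omega⟩
    have he : (⟨0, by omega⟩ : Fin n) + ⟨1, by omega⟩ = (⟨1, by omega⟩ : Fin n) := by
      apply Fin.ext
      simp [Fin.add_def, Nat.mod_eq_of_lt (show 1 < n by omega)]
    rwa [he] at h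
  have hadj_u1un : G.Adj u1 un := by
    have : un ∈ G.neighborSet u1 := by rw [hN1]; simp
    exact this
  -- distinctness
  have hu1_ne_v1 : u1 ≠ v1 := G.ne_of_adj hadj_u1v1
  have hv1_ne_v2 : v1 ≠ v2 := G.ne_of_adj hadj_v1v2
  have hu2_ne_un : u2 ≠ un := by
    intro h
    have := hinj h
    have : (1 : ℕ) = n - 1 := congrArg Fin.val this
    omega
  have hu1_ne_v2 : u1 ≠ v2 := by
    intro h
    have hsub : ({u2, un} : Finset V) ⊆ G.neighborFinset v2 := by
      intro x hx
      rw [SimpleGraph.mem_neighborFinset]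
      rcases Finset.mem_insert.1 hx with rfl | hx
      · exact h ▸ hadj_u1u2
      · rw [Finset.mem_singleton] at hx
        subst hx
        exact h ▸ hadj_u1un
    have hcard : ({u2, un} : Finset V).card = 2 := Finset.card_pair hu2_ne_un
    have := Finset.card_le_card hsub
    rw [hcard] at this
    rw [SimpleGraph.degree] at hv2leaf
    omega
  -- get an optimal minimal cover of H
  have hbddH : BddAbove {m | ∃ C : Finset V, gIsMinCover H C ∧ C.card = m} := by
    refine ⟨Fintype.card V, fun m hm => ?_⟩
    obtain ⟨C, _, rfl⟩ := hm
    exact Finset.card_le_univ C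
  have hneH : {m | ∃ C : Finset V, gIsMinCover H C ∧ C.card = m}.Nonempty := by
    obtain ⟨C, hC⟩ := exists_gMinCover H
    exact ⟨C.card, C, hC, rfl⟩
  have hmem := Nat.sSup_mem hneH hbddH
  obtain ⟨C, hC, hCcard⟩ := hmem
  have hCpriv := (gMinCover_iff H C).1 hC
  -- every element of C lies in s
  have hCs : ∀ x ∈ C, x ∈ s := by
    intro x hx
    obtain ⟨y, hxy, _⟩ := hCpriv.2 x hx
    exact hxy.2.1
  have hu1C : u1 ∉ C := fun h => (hCs u1 h).1 rfl
  have hv1C : v1 ∉ C := fun h => (hCs v1 h).2.1 rfl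
  have hv2C : v2 ∉ C := fun h => (hCs v2 h).2.2 rfl
  -- the new cover
  set C' : Finset V := insert u1 (insert v2 C) with hC'def
  have hC'card : C'.card = C.card + 2 := by
    rw [hC'def, Finset.card_insert_of_notMem, Finset.card_insert_of_notMem hv2C]
    simp [Finset.mem_insert, hu1C, hu1_ne_v2]
  -- neighbors of v2 : only v1
  have hNv2 : ∀ y, G.Adj v2 y → y = v1 := by
    intro y hy
    have hsub : ({y, v1} : Finset V) ⊆ G.neighborFinset v2 := by
      intro x hx
      rw [SimpleGraph.mem_neighborFinset]
      rcases Finset.mem_insert.1 hx with rfl | hx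
      · exact hy
      · rw [Finset.mem_singleton] at hx; subst hx; exact hadj_v1v2.symm
    by_contra hne
    have hcard : ({y, v1} : Finset V).card = 2 := Finset.card_pair hne
    have := Finset.card_le_card hsub
    rw [hcard] at this
    rw [SimpleGraph.degree] at hv2leaf
    omega
  -- neighbors of v1 : only u1, v2
  have hNv1' : ∀ y, G.Adj v1 y → y = u1 ∨ y = v2 := by
    intro y hy
    have : y ∈ G.neighborSet v1 := hy
    rw [hNv1] at this
    rcases this with h | h
    · exact Or.inl h
    · exact Or.inr h
  have hC'min : gIsMinCover G C' := by
    rw [gMinCover_iff]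
    constructor
    · intro x y hxy
      by_cases hx1 : x = u1
      · exact Or.inl (by simp [hC'def, hx1])
      by_cases hy1 : y = u1
      · exact Or.inr (by simp [hC'def, hy1])
      by_cases hx2 : x = v2
      · exact Or.inl (by simp [hC'def, hx2])
      by_cases hy2 : y = v2
      · exact Or.inr (by simp [hC'def, hy2])
      by_cases hxv1 : x = v1
      · subst hxv1
        rcases hNv1' y hxy with h | h
        · exact absurd h hy1
        · exact absurd h hy2
      by_cases hyv1 : y = v1
      · subst hyv1
        rcases hNv1' x hxy.symm with h | h
        · exact absurd h hx1
        · exact absurd h hx2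
      have hH : H.Adj x y := ⟨hxy, ⟨hx1, hxv1, hx2⟩, ⟨hy1, hyv1, hy2⟩⟩
      rcases hCpriv.1 hH with h | h
      · exact Or.inl (by simp [hC'def, h])
      · exact Or.inr (by simp [hC'def, h])
    · intro x hx
      have hv1C' : v1 ∉ C' := by
        simp only [hC'def, Finset.mem_insert]
        push_neg
        exact ⟨fun h => hu1_ne_v1 h.symm, hv1_ne_v2, hv1C⟩
      rcases Finset.mem_insert.1 hx with rfl | hx
      · exact ⟨v1, hadj_u1v1, hv1C'⟩
      rcases Finset.mem_insert.1 hx with rfl | hx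
      · exact ⟨v1, hadj_v1v2.symm, hv1C'⟩
      · obtain ⟨y, hxy, hyC⟩ := hCpriv.2 x hx
        refine ⟨y, hxy.1, ?_⟩
        have hys := hxy.2.2
        simp only [hC'def, Finset.mem_insert]
        push_neg
        exact ⟨fun h => hys.1 h, fun h => hys.2.2 h, hyC⟩
  -- conclude
  have hbddG : BddAbove {m | ∃ C : Finset V, gIsMinCover G C ∧ C.card = m} := by
    refine ⟨Fintype.card V, fun m hm => ?_⟩
    obtain ⟨D, _, rfl⟩ := hm
    exact Finset.card_le_univ D
  have hle : C'.card ≤ gTauMax G := le_csSup hbddG ⟨C', hC'min, rfl⟩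
  rw [hC'card] at hle
  calc gTauMax H + 2 = C.card + 2 := by rw [hCcard]; rfl
    _ ≤ gTauMax G := hle
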